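/- Under the same setup with φ continuously differentiable, concave and increasing, the function u ↦ G(t,u) is concave on [1,∞) for each fixed t ≥ 0; equivalently ∂²G/∂u²(t,u) ≤ 0. -/

import Mathlib

/-- If `φ` is C¹, increasing and concave, then `u ↦ G(t,u)` is concave on `[1,∞)`. -/
theorem stmt6 (φ φ' Φ Ψ : ℝ → ℝ) (G : ℝ → ℝ → ℝ)
    (hpos : ∀ u ≥ (1:ℝ), 0 < φ u)
    (hφd : ∀ s ≥ (1:ℝ), HasDerivAt φ (φ' s) s)
    (hφ'cont : ContinuousOn φ' (Set.Ici 1))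
    (hφ'nonneg : ∀ s ≥ (1:ℝ), 0 ≤ φ' s)
    (hφ'anti : AntitoneOn φ' (Set.Ici 1))
    (hΦ : ∀ s, Φ s = ∫ u in (1:ℝ)..s, 1 / φ u)
    (hPhiTop : ∀ M : ℝ, ∃ s ≥ (1:ℝ), M < Φ s)
    (hΨmem : ∀ v ≥ (0:ℝ), 1 ≤ Ψ v)
    (hΨΦ : ∀ s ≥ (1:ℝ), Ψ (Φ s) = s)
    (hΦΨ : ∀ v ≥ (0:ℝ), Φ (Ψ v) = v)
    (hG : ∀ t u, G t u = Ψ (Φ u + t)) :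
    ∀ t ≥ (0:ℝ), ConcaveOn ℝ (Set.Ici 1) (fun u => G t u) := by
  intro t ht
  have hΦeq : Φ = fun s => ∫ u in (1:ℝ)..s, 1 / φ u := funext hΦ
  -- continuity of φ and 1/φ on [1,∞)
  have hφcont : ContinuousOn φ (Set.Ici 1) := fun s hs =>
    (hφd s hs).continuousAt.continuousWithinAt
  have hfcont : ContinuousOn (fun u => 1 / φ u) (Set.Ici 1) :=
    continuousOn_const.div hφcont (fun s hs => (hpos s hs).ne')
  -- interval integrability
  have hint : ∀ a b : ℝ, 1 ≤ a → a ≤ b →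
      IntervalIntegrable (fun u => 1 / φ u) MeasureTheory.volume a b := by
    intro a b ha hab
    apply (hfcont.mono ?_).intervalIntegrable
    rw [Set.uIcc_of_le hab]
    exact fun x hx => le_trans ha hx.1
  have hΦ1 : Φ 1 = 0 := by rw [hΦ]; simp
  have hΦdiff : ∀ a b : ℝ, 1 ≤ a → a ≤ b → Φ b - Φ a = ∫ u in a..b, 1 / φ u := by
    intro a b ha hab
    rw [hΦ a, hΦ b]
    rw [intervalIntegral.integral_interval_sub_left (hint 1 b le_rfl (ha.trans hab))
      (hint 1 a le_rfl ha)]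
  -- Φ is strictly monotone on [1,∞)
  have hΦmono : StrictMonoOn Φ (Set.Ici 1) := by
    intro a ha b hb hab
    have h := hΦdiff a b ha hab.le
    have hpos' : 0 < ∫ u in a..b, 1 / φ u := by
      apply intervalIntegral.intervalIntegral_pos_of_pos_on (hint a b ha hab.le) ?_ hab
      intro x hx
      exact one_div_pos.mpr (hpos x (le_of_lt (lt_of_le_of_lt ha hx.1)))
    linarith
  have hΦnonneg : ∀ u ≥ (1:ℝ), 0 ≤ Φ u := by
    intro u hu
    have := hΦmono.monotoneOn Set.self_mem_Ici hu hu
    rw [hΦ1] at this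
    exact this
  -- Ψ v > 1 when v > 0
  have hΨgt : ∀ v > (0:ℝ), 1 < Ψ v := by
    intro v hv
    rcases lt_or_eq_of_le (hΨmem v hv.le) with h | h
    · exact h
    · exfalso
      have := hΦΨ v hv.le
      rw [← h, hΦ1] at this
      linarith
  -- Ψ is monotone on [0,∞)
  have hΨmono : MonotoneOn Ψ (Set.Ici 0) := by
    intro v hv w hw hvw
    by_contra h
    push_neg at h
    have := hΦmono (hΨmem w hw) (hΨmem v hv) h
    rw [hΦΨ v hv, hΦΨ w hw] at this
    exact absurd hvw (not_le.mpr this)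
  -- Ψ is continuous at every v > 0
  have hΨcont : ∀ v > (0:ℝ), ContinuousAt Ψ v := by
    intro v hv
    apply continuousAt_of_monotoneOn_of_image_mem_nhds hΨmono (Ici_mem_nhds hv)
    apply Filter.mem_of_superset (Ioi_mem_nhds (hΨgt v hv))
    intro s hs
    exact ⟨Φ s, hΦnonneg s (le_of_lt hs), hΨΦ s (le_of_lt hs)⟩
  -- derivative of Φ
  have hΦd : ∀ s > (1:ℝ), HasDerivAt Φ (1 / φ s) s := by
    intro s hs
    rw [hΦeq]
    apply intervalIntegral.integral_hasDerivAt_right (hint 1 s le_rfl hs.le)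
    · exact ⟨Set.Ioi 1, Ioi_mem_nhds hs,
        (hfcont.mono Set.Ioi_subset_Ici_self).aestronglyMeasurable measurableSet_Ioi⟩
    · exact ContinuousAt.div continuousAt_const (hφd s hs.le).continuousAt (hpos s hs.le).ne'
  -- continuity of Φ on [1,∞)
  have hΦcontOn : ContinuousOn Φ (Set.Ici 1) := by
    intro u hu
    rcases eq_or_lt_of_le (Set.mem_Ici.mp hu : (1:ℝ) ≤ u) with h1 | h1
    · rw [hΦeq]
      have h2 : HasDerivWithinAt (fun s => ∫ x in (1:ℝ)..s, 1 / φ x) (1 / φ 1)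
          (Set.Ici 1) 1 := by
        apply intervalIntegral.integral_hasDerivWithinAt_right (hint 1 1 le_rfl le_rfl)
          (t := Set.Ioi 1)
        · exact ⟨Set.Ici 1, Filter.mem_of_superset self_mem_nhdsWithin Set.Ioi_subset_Ici_self,
            hfcont.aestronglyMeasurable measurableSet_Ici⟩
        · exact (hfcont 1 Set.self_mem_Ici).mono Set.Ioi_subset_Ici_self
      exact h1 ▸ h2.continuousWithinAt
    · exact (hΦd u h1).continuousAt.continuousWithinAt
  -- derivative of Ψ
  have hΨd : ∀ v > (0:ℝ), HasDerivAt Ψ (φ (Ψ v)) v := by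
    intro v hv
    have h1 : 1 < Ψ v := hΨgt v hv
    have hd := hΦd (Ψ v) h1
    have hne : 1 / φ (Ψ v) ≠ 0 := one_div_ne_zero (hpos _ h1.le).ne'
    have hev : ∀ᶠ x in nhds v, Φ (Ψ x) = x := by
      filter_upwards [Ioi_mem_nhds hv] with x hx
      exact hΦΨ x (le_of_lt hx)
    have := HasDerivAt.of_local_left_inverse (hΨcont v hv) hd hne hev
    simpa [one_div] using this
  -- split on t = 0 or t > 0
  rcases eq_or_lt_of_le ht with rfl | ht0
  · -- t = 0 : G 0 u = u on [1,∞)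
    have hid : ∀ u ∈ Set.Ici (1:ℝ), G 0 u = u := by
      intro u hu
      rw [hG, add_zero, hΨΦ u hu]
    refine ⟨convex_Ici 1, ?_⟩
    intro x hx y hy a b ha hb hab
    have hm : a • x + b • y ∈ Set.Ici (1:ℝ) := (convex_Ici 1) hx hy ha hb hab
    show a • G 0 x + b • G 0 y ≤ G 0 (a • x + b • y)
    rw [hid _ hm, hid _ hx, hid _ hy]
  · -- t > 0
    set g : ℝ → ℝ := fun u => Ψ (Φ u + t) with hgdef
    have hvpos : ∀ u ≥ (1:ℝ), 0 < Φ u + t := fun u hu =>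
      add_pos_of_nonneg_of_pos (hΦnonneg u hu) ht0
    have hg1 : ∀ u ≥ (1:ℝ), 1 < g u := fun u hu => hΨgt _ (hvpos u hu)
    have hgΦ : ∀ u ≥ (1:ℝ), Φ (g u) = Φ u + t := fun u hu => hΦΨ _ (hvpos u hu).le
    have hgeu : ∀ u ≥ (1:ℝ), u ≤ g u := by
      intro u hu
      by_contra h
      push_neg at h
      have h2 := hΦmono (hg1 u hu).le hu h
      rw [hgΦ u hu] at h2
      linarith
    -- derivative of g
    have hgd : ∀ u ∈ Set.Ioi (1:ℝ), HasDerivAt g (φ (g u) / φ u) u := by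
      intro u hu
      have h1 : HasDerivAt (fun x => Φ x + t) (1 / φ u) u :=
        (hΦd u hu).add_const t
      have h2 : HasDerivAt Ψ (φ (g u)) (Φ u + t) := hΨd _ (hvpos u (le_of_lt hu))
      have h3 := h2.comp u h1
      have h4 : φ (g u) * (1 / φ u) = φ (g u) / φ u := by ring
      rw [h4] at h3
      exact h3
    -- the derivative u ↦ φ (g u) / φ u is antitone on (1,∞)
    have hanti : AntitoneOn (fun u => φ (g u) / φ u) (Set.Ioi 1) := by
      have hhd : ∀ u ∈ Set.Ioi (1:ℝ), HasDerivAt (fun x => φ (g x) / φ x)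
          ((φ' (g u) * (φ (g u) / φ u) * φ u - φ (g u) * φ' u) / φ u ^ 2) u := by
        intro u hu
        have hnum : HasDerivAt (fun x => φ (g x)) (φ' (g u) * (φ (g u) / φ u)) u :=
          (hφd (g u) (hg1 u (le_of_lt hu)).le).comp u (hgd u hu)
        exact hnum.div (hφd u (le_of_lt hu)) (hpos u (le_of_lt hu)).ne'
      apply antitoneOn_of_deriv_nonpos (convex_Ioi 1)
      · exact fun u hu => (hhd u hu).continuousAt.continuousWithinAt
      · intro u hu
        rw [interior_Ioi] at hu
        exact (hhd u hu).differentiableAt.differentiableWithinAt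
      · intro u hu
        rw [interior_Ioi] at hu
        rw [(hhd u hu).deriv]
        apply div_nonpos_of_nonpos_of_nonneg ?_ (sq_nonneg _)
        have hφu : φ u ≠ 0 := (hpos u (le_of_lt hu)).ne'
        have e1 : φ' (g u) * (φ (g u) / φ u) * φ u = φ (g u) * φ' (g u) := by
          field_simp
        rw [e1]
        have hle : φ' (g u) ≤ φ' u :=
          hφ'anti (Set.mem_Ici.mpr (le_of_lt hu)) (Set.mem_Ici.mpr (hg1 u (le_of_lt hu)).le) (hgeu u (le_of_lt hu))
        have hgpos : 0 < φ (g u) := hpos _ (hg1 u (le_of_lt hu)).le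
        nlinarith
    -- continuity of g on [1,∞)
    have hgcont : ContinuousOn g (Set.Ici 1) := by
      intro u hu
      have h1 : ContinuousWithinAt (fun x => Φ x + t) (Set.Ici 1) u :=
        (hΦcontOn u hu).add continuousWithinAt_const
      exact ContinuousAt.comp_continuousWithinAt (f := fun x => Φ x + t) (x := u)
        (hΨcont _ (hvpos u hu)) h1
    -- conclude
    have hmain : ConcaveOn ℝ (Set.Ici 1) g := by
      apply AntitoneOn.concaveOn_of_deriv (convex_Ici 1) hgcont
      · intro u hu
        rw [interior_Ici] at hu
        exact (hgd u hu).differentiableAt.differentiableWithinAt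
      · rw [interior_Ici]
        intro u hu v hv huv
        rw [(hgd u hu).deriv, (hgd v hv).deriv]
        exact hanti hu hv huv
    have hGg : (fun u => G t u) = g := funext fun u => hG t u
    rw [hGg]
    exact hmain
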